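/- For the quadratic P·x² + (θP + sḠH̄ − m)x + θsḠH̄ = 0 with θ, s, Ḡ, H̄ > 0: if P > sθḠ/H̄ and θP + sḠH̄ + 2√(sθPḠH̄) < m < (P + sḠ)(θ + H̄), then the quadratic has two distinct real roots, both lying in the open interval (0, H̄). -/
import Mathlib


open Set

/-- For the quadratic `P x² + (θP + sḠH̄ - m) x + θsḠH̄ = 0` with
`θ, s, Ḡ, H̄ > 0`, if `P > sθḠ/H̄` and
`θP + sḠH̄ + 2√(sθPḠH̄) < m < (P + sḠ)(θ + H̄)`, then the quadratic has two
distinct real roots, both in the open interval `(0, H̄)`. -/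
theorem quadratic_two_roots_in_interval
    (P s G H θ m : ℝ)
    (hθ : 0 < θ) (hs : 0 < s) (hG : 0 < G) (hH : 0 < H)
    (hP : P > s * θ * G / H)
    (hml : θ * P + s * G * H + 2 * Real.sqrt (s * θ * P * G * H) < m)
    (hmu : m < (P + s * G) * (θ + H))
    (f : ℝ → ℝ)
    (hf : f = fun x => P * x ^ 2 + (θ * P + s * G * H - m) * x + θ * s * G * H) :
    ∃ x y : ℝ, x ≠ y ∧ f x = 0 ∧ f y = 0 ∧ x ∈ Ioo 0 H ∧ y ∈ Ioo 0 H := by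
  have hP0 : 0 < P := lt_trans (div_pos (by positivity) hH) hP
  set b : ℝ := θ * P + s * G * H - m with hbdef
  have hprod : (0:ℝ) ≤ s * θ * P * G * H := by positivity
  have hsq : Real.sqrt (s * θ * P * G * H) ^ 2 = s * θ * P * G * H := Real.sq_sqrt hprod
  have hsn : 0 ≤ Real.sqrt (s * θ * P * G * H) := Real.sqrt_nonneg _
  have hb : 2 * Real.sqrt (s * θ * P * G * H) < -b := by simp only [hbdef]; linarith
  have hbpos : 0 < -b := lt_of_le_of_lt (by positivity) hb
  set D : ℝ := b ^ 2 - 4 * P * (θ * s * G * H) with hDdef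
  have hD : 0 < D := by nlinarith [hsq, hsn, hb]
  have hDs : Real.sqrt D ^ 2 = D := Real.sq_sqrt hD.le
  have hDsp : 0 < Real.sqrt D := Real.sqrt_pos.mpr hD
  -- f(H) > 0
  have hfH : 0 < P * H ^ 2 + b * H + θ * s * G * H := by
    nlinarith [mul_pos hH (sub_pos.mpr hmu)]
  -- vertex < H : 2PH + b > 0
  have hsθG : s * θ * G < P * H := by
    have := (div_lt_iff₀ hH).mp hP
    linarith
  have hvx : 0 < 2 * P * H + b := by simp only [hbdef]; nlinarith
  have h1 : Real.sqrt D < -b := by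
    rw [Real.sqrt_lt' hbpos]; nlinarith [mul_pos hP0 (by positivity : (0:ℝ) < θ * s * G * H)]
  have h2 : Real.sqrt D < 2 * P * H + b := by
    rw [Real.sqrt_lt' hvx]; nlinarith [hfH, hP0]
  have key : ∀ u : ℝ, u ^ 2 = D →
      P * ((-b + u) / (2 * P)) ^ 2 + b * ((-b + u) / (2 * P)) + θ * s * G * H = 0 := by
    intro u hu
    have hne : (2 * P) ≠ 0 := by positivity
    have : P * ((-b + u) / (2 * P)) ^ 2 + b * ((-b + u) / (2 * P)) + θ * s * G * H
        = (u ^ 2 - D) / (4 * P) := by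
      field_simp
      ring
    rw [this, hu]; simp
  refine ⟨(-b + -Real.sqrt D) / (2 * P), (-b + Real.sqrt D) / (2 * P), ?_, ?_, ?_, ?_, ?_⟩
  · intro h
    rw [div_eq_div_iff (by positivity) (by positivity)] at h
    nlinarith [hDsp]
  · rw [hf]; exact key _ (by rw [neg_pow]; simpa using hDs)
  · rw [hf]; exact key _ hDs
  · constructor
    · apply div_pos (by linarith) (by positivity)
    · rw [div_lt_iff₀ (by positivity)]; linarith [h2, hDsp]
  · constructor
    · apply div_pos (by linarith) (by positivity)
    · rw [div_lt_iff₀ (by positivity)]; linarith
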